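/- In the rewrite game over {a,b} with rules a → ε, a^2 → ε, b → ε, write a word w uniquely as a^{i_0} b a^{i_1} b ⋯ b a^{i_k} and set S(w) = (2k + 2α_1 + α_2) mod 4, where α_r is the number of indices j with i_j ≡ r (mod 3). Then the Grundy value of w is 0, 1, 2, 3 according to whether S(w) = 0, 2, 1, 3 respectively. -/

import Mathlib

inductive AB | a | b
deriving DecidableEq

/-- One move of the game `{a → ε, a² → ε, b → ε}`. -/
def Step (w w' : List AB) : Prop :=
  ∃ x y : List AB, w' = x ++ y ∧
    (w = x ++ [AB.a] ++ y ∨ w = x ++ [AB.a, AB.a] ++ y ∨ w = x ++ [AB.b] ++ y)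

/-- The minimum excluded value of a set of naturals. -/
noncomputable def mex (S : Set ℕ) : ℕ := sInf {n | n ∉ S}

/-- `g` is the Grundy function of the game with moves `step`. -/
def IsGrundy (step : List AB → List AB → Prop) (g : List AB → ℕ) : Prop :=
  ∀ w, g w = mex (g '' {w' | step w w'})

/-- The lengths `i_0, …, i_k` of the (possibly empty) maximal blocks of `a`'s in
the decomposition `w = a^{i_0} b a^{i_1} b ⋯ b a^{i_k}`. -/
def blocks (w : List AB) : List ℕ := (w.splitOn AB.b).map List.length

/-- `α_r`: the number of blocks of `a`'s whose length is `≡ r (mod 3)`. -/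
def alpha (w : List AB) (r : ℕ) : ℕ := (blocks w).countP (fun i => i % 3 == r)

/-- `S(w) = (2k + 2α₁ + α₂) mod 4`, where `k = |w|_b`. -/
def S (w : List AB) : ℕ := (2 * w.count AB.b + 2 * alpha w 1 + alpha w 2) % 4

/-! ### block structure lemmas -/

lemma blocks_nil : blocks ([] : List AB) = [0] := rfl

lemma blocks_cons_b (w : List AB) : blocks (AB.b :: w) = 0 :: blocks w := by
  simp [blocks, List.splitOn, List.splitOnP_cons]

lemma blocks_cons_a (w : List AB) :
    ∃ h t, blocks w = h :: t ∧ blocks (AB.a :: w) = (h+1) :: t := by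
  have hne := List.splitOnP_ne_nil (fun x => x == AB.b) w
  obtain ⟨s, ss, hs⟩ := List.exists_cons_of_ne_nil hne
  refine ⟨s.length, ss.map List.length, ?_, ?_⟩ <;>
    simp [blocks, List.splitOn, List.splitOnP_cons, hs]

lemma blocks_head_a (w : List AB) (h : ℕ) (t : List ℕ) (hb : blocks w = (h+1) :: t) :
    ∃ u, w = AB.a :: u ∧ blocks u = h :: t := by
  cases w with
  | nil => rw [blocks_nil] at hb; simp at hb
  | cons c u =>
    cases c with
    | a =>
      obtain ⟨h', t', hu, hau⟩ := blocks_cons_a u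
      rw [hau] at hb
      obtain ⟨hh, ht⟩ := List.cons.injEq .. ▸ hb
      refine ⟨u, rfl, ?_⟩
      rw [hu, ht]
      congr 1
      omega
    | b =>
      rw [blocks_cons_b] at hb
      simp at hb

lemma length_blocks (w : List AB) : (blocks w).length = w.count AB.b + 1 := by
  induction w with
  | nil => rfl
  | cons c u ih =>
    cases c with
    | a =>
      obtain ⟨h, t, hu, hau⟩ := blocks_cons_a u
      rw [hau]; rw [hu] at ih
      simpa using ih
    | b => rw [blocks_cons_b]; simp [ih, List.count_cons]

lemma count_b_cons_a (w : List AB) : (AB.a :: w).count AB.b = w.count AB.b := by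
  simp [List.count_cons]

lemma count_b_cons_b (w : List AB) : (AB.b :: w).count AB.b = w.count AB.b + 1 := by
  simp [List.count_cons]

lemma step_cons (c : AB) (w w' : List AB) (h : Step w w') : Step (c :: w) (c :: w') := by
  obtain ⟨x, y, h1, h2⟩ := h
  refine ⟨c :: x, y, by rw [h1]; rfl, ?_⟩
  rcases h2 with h | h | h
  · exact Or.inl (by rw [h]; rfl)
  · exact Or.inr (Or.inl (by rw [h]; rfl))
  · exact Or.inr (Or.inr (by rw [h]; rfl))

/-! ### the three move constructions at block level -/

lemma del_a (w : List AB) : ∀ (p : List ℕ) (i : ℕ) (q : List ℕ),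
    blocks w = p ++ i :: q → 1 ≤ i →
    ∃ w', Step w w' ∧ blocks w' = p ++ (i-1) :: q ∧ w'.count AB.b = w.count AB.b := by
  induction w with
  | nil =>
    intro p i q hb hi
    rw [blocks_nil] at hb
    rcases p with _ | ⟨p0, p'⟩ <;> simp at hb <;> omega
  | cons c u ih =>
    intro p i q hb hi
    cases c with
    | a =>
      obtain ⟨h, t, hu, hau⟩ := blocks_cons_a u
      rw [hau] at hb
      rcases p with _ | ⟨p0, p'⟩
      · simp only [List.nil_append] at hb ⊢
        obtain ⟨hh, ht⟩ := List.cons.injEq .. ▸ hb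
        refine ⟨u, ⟨[], u, rfl, Or.inl rfl⟩, ?_, count_b_cons_a u⟩
        rw [hu, ht, ← hh]; simp
      · simp only [List.cons_append] at hb
        obtain ⟨hh, ht⟩ := List.cons.injEq .. ▸ hb
        obtain ⟨w'', hs, hb'', hc⟩ := ih (h :: p') i q (by rw [hu, ht]; rfl) hi
        obtain ⟨h2, t2, hw2, haw2⟩ := blocks_cons_a w''
        rw [hb''] at hw2
        obtain ⟨hh2, ht2⟩ := List.cons.injEq .. ▸ hw2.symm
        refine ⟨AB.a :: w'', step_cons _ _ _ hs, ?_, ?_⟩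
        · rw [haw2, hh2, ht2, ← hh]; rfl
        · rw [count_b_cons_a, count_b_cons_a, hc]
    | b =>
      rw [blocks_cons_b] at hb
      rcases p with _ | ⟨p0, p'⟩
      · simp only [List.nil_append] at hb
        obtain ⟨hh, ht⟩ := List.cons.injEq .. ▸ hb
        omega
      · simp only [List.cons_append] at hb
        obtain ⟨hh, ht⟩ := List.cons.injEq .. ▸ hb
        obtain ⟨w'', hs, hb'', hc⟩ := ih p' i q ht hi
        refine ⟨AB.b :: w'', step_cons _ _ _ hs, ?_, ?_⟩
        · rw [blocks_cons_b, hb'', ← hh]; rfl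
        · rw [count_b_cons_b, count_b_cons_b, hc]

lemma del_aa (w : List AB) : ∀ (p : List ℕ) (i : ℕ) (q : List ℕ),
    blocks w = p ++ i :: q → 2 ≤ i →
    ∃ w', Step w w' ∧ blocks w' = p ++ (i-2) :: q ∧ w'.count AB.b = w.count AB.b := by
  induction w with
  | nil =>
    intro p i q hb hi
    rw [blocks_nil] at hb
    rcases p with _ | ⟨p0, p'⟩ <;> simp at hb <;> omega
  | cons c u ih =>
    intro p i q hb hi
    cases c with
    | a =>
      obtain ⟨h, t, hu, hau⟩ := blocks_cons_a u
      rw [hau] at hb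
      rcases p with _ | ⟨p0, p'⟩
      · simp only [List.nil_append] at hb ⊢
        obtain ⟨hh, ht⟩ := List.cons.injEq .. ▸ hb
        -- i = h+1 ≥ 2 so h ≥ 1
        have hh1 : h = (h - 1) + 1 := by omega
        rw [hh1] at hu
        obtain ⟨v, hv, hbv⟩ := blocks_head_a u (h-1) t hu
        refine ⟨v, ⟨[], v, rfl, Or.inr (Or.inl (by rw [hv]; rfl))⟩, ?_, ?_⟩
        · rw [hbv, ht]; congr 1; omega
        · rw [hv, count_b_cons_a, count_b_cons_a]
      · simp only [List.cons_append] at hb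
        obtain ⟨hh, ht⟩ := List.cons.injEq .. ▸ hb
        obtain ⟨w'', hs, hb'', hc⟩ := ih (h :: p') i q (by rw [hu, ht]; rfl) hi
        obtain ⟨h2, t2, hw2, haw2⟩ := blocks_cons_a w''
        rw [hb''] at hw2
        obtain ⟨hh2, ht2⟩ := List.cons.injEq .. ▸ hw2.symm
        refine ⟨AB.a :: w'', step_cons _ _ _ hs, ?_, ?_⟩
        · rw [haw2, hh2, ht2, ← hh]; rfl
        · rw [count_b_cons_a, count_b_cons_a, hc]
    | b =>
      rw [blocks_cons_b] at hb
      rcases p with _ | ⟨p0, p'⟩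
      · simp only [List.nil_append] at hb
        obtain ⟨hh, ht⟩ := List.cons.injEq .. ▸ hb
        omega
      · simp only [List.cons_append] at hb
        obtain ⟨hh, ht⟩ := List.cons.injEq .. ▸ hb
        obtain ⟨w'', hs, hb'', hc⟩ := ih p' i q ht hi
        refine ⟨AB.b :: w'', step_cons _ _ _ hs, ?_, ?_⟩
        · rw [blocks_cons_b, hb'', ← hh]; rfl
        · rw [count_b_cons_b, count_b_cons_b, hc]

lemma del_b (w : List AB) : ∀ (p : List ℕ) (i j : ℕ) (q : List ℕ),
    blocks w = p ++ i :: j :: q →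
    ∃ w', Step w w' ∧ blocks w' = p ++ (i+j) :: q ∧ w'.count AB.b + 1 = w.count AB.b := by
  induction w with
  | nil =>
    intro p i j q hb
    rw [blocks_nil] at hb
    rcases p with _ | ⟨p0, p'⟩ <;> simp at hb
  | cons c u ih =>
    intro p i j q hb
    cases c with
    | a =>
      obtain ⟨h, t, hu, hau⟩ := blocks_cons_a u
      rw [hau] at hb
      rcases p with _ | ⟨p0, p'⟩
      · simp only [List.nil_append] at hb ⊢
        obtain ⟨hh, ht⟩ := List.cons.injEq .. ▸ hb
        obtain ⟨w'', hs, hb'', hc⟩ := ih [] h j q (by rw [hu, ht]; rfl)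
        obtain ⟨h2, t2, hw2, haw2⟩ := blocks_cons_a w''
        rw [hb''] at hw2
        simp only [List.nil_append] at hw2
        obtain ⟨hh2, ht2⟩ := List.cons.injEq .. ▸ hw2.symm
        refine ⟨AB.a :: w'', step_cons _ _ _ hs, ?_, ?_⟩
        · rw [haw2, hh2, ht2]
          have : h + j + 1 = i + j := by omega
          rw [this]
        · rw [count_b_cons_a, count_b_cons_a, hc]
      · simp only [List.cons_append] at hb
        obtain ⟨hh, ht⟩ := List.cons.injEq .. ▸ hb
        obtain ⟨w'', hs, hb'', hc⟩ := ih (h :: p') i j q (by rw [hu, ht]; rfl)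
        obtain ⟨h2, t2, hw2, haw2⟩ := blocks_cons_a w''
        rw [hb''] at hw2
        obtain ⟨hh2, ht2⟩ := List.cons.injEq .. ▸ hw2.symm
        refine ⟨AB.a :: w'', step_cons _ _ _ hs, ?_, ?_⟩
        · rw [haw2, hh2, ht2, ← hh]; rfl
        · rw [count_b_cons_a, count_b_cons_a, hc]
    | b =>
      rw [blocks_cons_b] at hb
      rcases p with _ | ⟨p0, p'⟩
      · simp only [List.nil_append] at hb
        obtain ⟨hh, ht⟩ := List.cons.injEq .. ▸ hb
        refine ⟨u, ⟨[], u, rfl, Or.inr (Or.inr rfl)⟩, ?_, ?_⟩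
        · rw [ht, ← hh]; simp
        · rw [count_b_cons_b]
      · simp only [List.cons_append] at hb
        obtain ⟨hh, ht⟩ := List.cons.injEq .. ▸ hb
        obtain ⟨w'', hs, hb'', hc⟩ := ih p' i j q ht
        refine ⟨AB.b :: w'', step_cons _ _ _ hs, ?_, ?_⟩
        · rw [blocks_cons_b, hb'', ← hh]; rfl
        · rw [count_b_cons_b, count_b_cons_b]; omega

/-! ### appending -/

lemma blocks_append (x : List AB) : ∀ (y : List AB) (m : ℕ) (q : List ℕ),
    blocks y = m :: q →
    ∃ p n, blocks x = p ++ [n] ∧ blocks (x ++ y) = p ++ (n + m) :: q := by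
  induction x with
  | nil =>
    intro y m q hy
    exact ⟨[], 0, rfl, by simpa using hy⟩
  | cons c u ih =>
    intro y m q hy
    cases c with
    | a =>
      obtain ⟨p, n, h1, h2⟩ := ih y m q hy
      obtain ⟨h, t, hu, hau⟩ := blocks_cons_a u
      obtain ⟨h2', t2', huy, hauy⟩ := blocks_cons_a (u ++ y)
      rw [h1] at hu; rw [h2] at huy
      rcases p with _ | ⟨p0, p'⟩
      · simp only [List.nil_append] at hu huy
        obtain ⟨e1, e2⟩ := List.cons.injEq .. ▸ hu.symm
        obtain ⟨e3, e4⟩ := List.cons.injEq .. ▸ huy.symm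
        refine ⟨[], n + 1, ?_, ?_⟩
        · rw [hau, e1, e2]; rfl
        · show blocks (AB.a :: (u ++ y)) = _
          rw [hauy, e3, e4]
          simp only [List.nil_append]
          congr 1
          omega
      · simp only [List.cons_append] at hu huy
        obtain ⟨e1, e2⟩ := List.cons.injEq .. ▸ hu.symm
        obtain ⟨e3, e4⟩ := List.cons.injEq .. ▸ huy.symm
        refine ⟨(p0 + 1) :: p', n, ?_, ?_⟩
        · rw [hau, e1, e2]; rfl
        · show blocks (AB.a :: (u ++ y)) = _
          rw [hauy, e3, e4]; rfl
    | b =>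
      obtain ⟨p, n, h1, h2⟩ := ih y m q hy
      refine ⟨0 :: p, n, ?_, ?_⟩
      · rw [blocks_cons_b, h1]; rfl
      · show blocks (AB.b :: (u ++ y)) = _
        rw [blocks_cons_b, h2]; rfl

/-! ### the invariant -/

def cc (r : ℕ) : ZMod 4 := if r = 1 then 2 else if r = 2 then 1 else 0

def sig (L : List ℕ) : ZMod 4 := (L.map fun i => cc (i % 3)).sum

@[simp] lemma sig_nil : sig [] = 0 := rfl
@[simp] lemma sig_cons (i : ℕ) (L : List ℕ) : sig (i :: L) = cc (i % 3) + sig L := rfl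
@[simp] lemma sig_append (L M : List ℕ) : sig (L ++ M) = sig L + sig M := by
  simp [sig]

def V (w : List AB) : ZMod 4 := 2 * (w.count AB.b : ZMod 4) + sig (blocks w)

lemma sig_eq (L : List ℕ) :
    sig L = 2 * ((L.countP fun i => i % 3 == 1 : ℕ) : ZMod 4)
      + ((L.countP fun i => i % 3 == 2 : ℕ) : ZMod 4) := by
  induction L with
  | nil => simp
  | cons i L ih =>
    have h3 : i % 3 = 0 ∨ i % 3 = 1 ∨ i % 3 = 2 := by omega
    rcases h3 with h | h | h <;>
      simp [List.countP_cons, h, cc, ih] <;> push_cast <;> ring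

lemma V_natCast (w : List AB) :
    V w = ((2 * w.count AB.b + 2 * alpha w 1 + alpha w 2 : ℕ) : ZMod 4) := by
  rw [V, sig_eq]
  unfold alpha
  push_cast
  ring

lemma S_val (w : List AB) : S w = (V w).val := by
  rw [V_natCast, ZMod.val_natCast, S]

lemma V_eq_of_S_eq {w w' : List AB} (h : S w = S w') : V w = V w' := by
  have h1 := S_val w
  have h2 := S_val w'
  have : (V w).val = (V w').val := by omega
  exact ZMod.val_injective 4 this

lemma V_cast_S (w : List AB) : V w = ((S w : ℕ) : ZMod 4) := by
  rw [S_val, ZMod.natCast_val, ZMod.cast_id]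

/-! ### every move changes V -/

lemma step_length {w w' : List AB} (h : Step w w') : w'.length < w.length := by
  obtain ⟨x, y, h1, h2⟩ := h
  subst h1
  rcases h2 with h | h | h <;> subst h <;> simp <;> omega

lemma cc_succ_ne (i : ℕ) : cc ((i + 1) % 3) ≠ cc (i % 3) := by
  have h3 : i % 3 = 0 ∨ i % 3 = 1 ∨ i % 3 = 2 := by omega
  rcases h3 with h | h | h <;>
    · have : (i+1) % 3 = (i % 3 + 1) % 3 := by omega
      rw [this, h]
      decide

lemma cc_succ2_ne (i : ℕ) : cc ((i + 2) % 3) ≠ cc (i % 3) := by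
  have h3 : i % 3 = 0 ∨ i % 3 = 1 ∨ i % 3 = 2 := by omega
  rcases h3 with h | h | h <;>
    · have : (i+2) % 3 = (i % 3 + 2) % 3 := by omega
      rw [this, h]
      decide

lemma blocks_exists (y : List AB) : ∃ m q, blocks y = m :: q := by
  rcases hbw : blocks y with _ | ⟨m, q⟩
  · exfalso
    have hlen := congrArg List.length hbw
    simp only [blocks, List.length_map, List.length_nil] at hlen
    have h0 : y.splitOn AB.b = [] := List.length_eq_zero_iff.mp hlen
    exact List.splitOnP_ne_nil _ y h0
  · exact ⟨m, q, rfl⟩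

lemma step_V {w w' : List AB} (h : Step w w') : V w' ≠ V w := by
  obtain ⟨x, y, h1, h2⟩ := h
  obtain ⟨m, q, hy⟩ := blocks_exists y
  obtain ⟨p, n, hx, hxy⟩ := blocks_append x y m q hy
  subst h1
  rcases h2 with h | h | h <;> subst h
  · -- delete one a
    obtain ⟨h', t', hy', hay⟩ := blocks_cons_a y
    rw [hy] at hy'
    obtain ⟨e1, e2⟩ := List.cons.injEq .. ▸ hy'.symm
    obtain ⟨p2, n2, hx2, hw⟩ := blocks_append x (AB.a :: y) (m + 1) q (by rw [hay, e1, e2])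
    have hpn : p2 = p ∧ n2 = n := by
      rw [hx] at hx2
      have hl := List.append_inj' hx2.symm rfl
      exact ⟨hl.1, by simpa using hl.2⟩
    rw [hpn.1, hpn.2] at hw
    intro hVeq
    rw [show x ++ [AB.a] ++ y = x ++ AB.a :: y by simp] at hVeq
    simp only [V] at hVeq
    have hcnt : (x ++ AB.a :: y).count AB.b = (x ++ y).count AB.b := by
      simp [List.count_append, List.count_cons]
    rw [hxy, hw, hcnt] at hVeq
    simp only [sig_append, sig_cons] at hVeq
    have hthis : cc ((n + m) % 3) = cc ((n + (m + 1)) % 3) := by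
      linear_combination hVeq
    rw [show n + (m + 1) = (n + m) + 1 by ring] at hthis
    exact cc_succ_ne (n + m) hthis.symm
  · -- delete aa
    obtain ⟨h', t', hy', hay⟩ := blocks_cons_a y
    rw [hy] at hy'
    obtain ⟨e1, e2⟩ := List.cons.injEq .. ▸ hy'.symm
    obtain ⟨h'', t'', hay', haay⟩ := blocks_cons_a (AB.a :: y)
    rw [hay] at hay'
    obtain ⟨e3, e4⟩ := List.cons.injEq .. ▸ hay'.symm
    obtain ⟨p2, n2, hx2, hw⟩ := blocks_append x (AB.a :: AB.a :: y) (m + 2) q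
      (by rw [haay, e3, e4, e1, e2])
    have hpn : p2 = p ∧ n2 = n := by
      rw [hx] at hx2
      have hl := List.append_inj' hx2.symm rfl
      exact ⟨hl.1, by simpa using hl.2⟩
    rw [hpn.1, hpn.2] at hw
    intro hVeq
    rw [show x ++ [AB.a, AB.a] ++ y = x ++ AB.a :: AB.a :: y by simp] at hVeq
    simp only [V] at hVeq
    have hcnt : (x ++ AB.a :: AB.a :: y).count AB.b = (x ++ y).count AB.b := by
      simp [List.count_append, List.count_cons]
    rw [hxy, hw, hcnt] at hVeq
    simp only [sig_append, sig_cons] at hVeq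
    have hthis : cc ((n + m) % 3) = cc ((n + (m + 2)) % 3) := by
      linear_combination hVeq
    rw [show n + (m + 2) = (n + m) + 2 by ring] at hthis
    exact cc_succ2_ne (n + m) hthis.symm
  · -- delete b
    obtain ⟨p2, n2, hx2, hw⟩ := blocks_append x (AB.b :: y) 0 (m :: q)
      (by rw [blocks_cons_b, hy])
    have hpn : p2 = p ∧ n2 = n := by
      rw [hx] at hx2
      have hl := List.append_inj' hx2.symm rfl
      exact ⟨hl.1, by simpa using hl.2⟩
    rw [hpn.1, hpn.2] at hw
    intro hVeq
    rw [show x ++ [AB.b] ++ y = x ++ AB.b :: y by simp] at hVeq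
    simp only [V] at hVeq
    have hcnt : ((x ++ AB.b :: y).count AB.b : ZMod 4) = ((x ++ y).count AB.b : ZMod 4) + 1 := by
      have : (x ++ AB.b :: y).count AB.b = (x ++ y).count AB.b + 1 := by
        simp [List.count_append, List.count_cons]
        omega
      rw [this]; push_cast; ring
    rw [hxy, hw, hcnt] at hVeq
    simp only [sig_append, sig_cons] at hVeq
    have hkey : cc ((n + m) % 3) = 2 + cc ((n + 0) % 3) + cc (m % 3) := by
      linear_combination hVeq
    have h3n : n % 3 = 0 ∨ n % 3 = 1 ∨ n % 3 = 2 := by omega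
    have h3m : m % 3 = 0 ∨ m % 3 = 1 ∨ m % 3 = 2 := by omega
    have hnm : (n + m) % 3 = (n % 3 + m % 3) % 3 := by omega
    rw [show n + 0 = n by ring] at hkey
    rw [hnm] at hkey
    rcases h3n with h | h | h <;> rcases h3m with h' | h' | h' <;>
      rw [h, h'] at hkey <;> revert hkey <;> decide

/-! ### mex -/

lemma mex_eq (T : Set ℕ) (n : ℕ) (hn : n ∉ T) (h : ∀ m < n, m ∈ T) : mex T = n := by
  unfold mex
  refine le_antisymm (Nat.sInf_le hn) ?_
  by_contra hlt
  push_neg at hlt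
  have hmem := Nat.sInf_mem (⟨n, hn⟩ : Set.Nonempty {n | n ∉ T})
  exact hmem (h _ hlt)

/-! ### existence of moves with prescribed V-change -/

lemma ex_res2 (w : List AB) (hex : ∃ i ∈ blocks w, i % 3 = 2) :
    (∃ w', Step w w' ∧ V w' = V w + 1) ∧ (∃ w', Step w w' ∧ V w' = V w + 3) := by
  obtain ⟨i, hmem, hres⟩ := hex
  obtain ⟨p, q, hpq⟩ := List.append_of_mem hmem
  constructor
  · obtain ⟨w', hs, hb, hc⟩ := del_a w p i q hpq (by omega)
    refine ⟨w', hs, ?_⟩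
    simp only [V]
    rw [hb, hpq, hc]
    simp only [sig_append, sig_cons]
    rw [hres, show (i-1) % 3 = 1 by omega]
    have hccx : (cc 1 : ZMod 4) = cc 2 + 1 := by decide
    linear_combination hccx
  · obtain ⟨w', hs, hb, hc⟩ := del_aa w p i q hpq (by omega)
    refine ⟨w', hs, ?_⟩
    simp only [V]
    rw [hb, hpq, hc]
    simp only [sig_append, sig_cons]
    rw [hres, show (i-2) % 3 = 0 by omega]
    have hccx : (cc 0 : ZMod 4) = cc 2 + 3 := by decide
    linear_combination hccx

lemma ex_res1 (w : List AB) (hex : ∃ i ∈ blocks w, i % 3 = 1) :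
    ∃ w', Step w w' ∧ V w' = V w + 2 := by
  obtain ⟨i, hmem, hres⟩ := hex
  obtain ⟨p, q, hpq⟩ := List.append_of_mem hmem
  obtain ⟨w', hs, hb, hc⟩ := del_a w p i q hpq (by omega)
  refine ⟨w', hs, ?_⟩
  simp only [V]
  rw [hb, hpq, hc]
  simp only [sig_append, sig_cons]
  rw [hres, show (i-1) % 3 = 0 by omega]
  have hccx : (cc 0 : ZMod 4) = cc 1 + 2 := by decide
  linear_combination hccx

lemma ex_merge (w : List AB) (hcnt : 1 ≤ w.count AB.b)
    (hno1 : ∀ i ∈ blocks w, i % 3 ≠ 1) :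
    ∃ w', Step w w' ∧ V w' = V w + 2 := by
  obtain ⟨i, j, q, hb⟩ : ∃ i j q, blocks w = i :: j :: q := by
    have hl := length_blocks w
    rcases hbw : blocks w with _ | ⟨i, _ | ⟨j, q⟩⟩
    · rw [hbw] at hl; simp at hl
    · rw [hbw] at hl; simp at hl; omega
    · exact ⟨i, j, q, rfl⟩
  obtain ⟨w', hs, hb', hc⟩ := del_b w [] i j q (by rw [hb]; rfl)
  refine ⟨w', hs, ?_⟩
  have hi : i % 3 ≠ 1 := hno1 i (by rw [hb]; simp)
  have hj : j % 3 ≠ 1 := hno1 j (by rw [hb]; simp)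
  simp only [V]
  rw [hb', hb]
  simp only [List.nil_append, sig_cons]
  have hcc : ((w.count AB.b : ℕ) : ZMod 4) = ((w'.count AB.b : ℕ) : ZMod 4) + 1 := by
    rw [← hc]; push_cast; ring
  rw [hcc]
  have h3n : i % 3 = 0 ∨ i % 3 = 2 := by omega
  have h3m : j % 3 = 0 ∨ j % 3 = 2 := by omega
  have hnm : (i + j) % 3 = (i % 3 + j % 3) % 3 := by omega
  rw [hnm]
  rcases h3n with h | h <;> rcases h3m with h' | h'
  · rw [h, h']
    have hccx : (cc ((0+0)%3) : ZMod 4) = cc 0 + cc 0 + 4 := by decide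
    linear_combination hccx
  · rw [h, h']
    have hccx : (cc ((0+2)%3) : ZMod 4) = cc 0 + cc 2 + 4 := by decide
    linear_combination hccx
  · rw [h, h']
    have hccx : (cc ((2+0)%3) : ZMod 4) = cc 2 + cc 0 + 4 := by decide
    linear_combination hccx
  · rw [h, h']
    have hccx : (cc ((2+2)%3) : ZMod 4) = cc 2 + cc 2 + 4 := by decide
    linear_combination hccx

/-! ### the value function -/

def fv (w : List AB) : ℕ :=
  if S w = 0 then 0 else if S w = 2 then 1 else if S w = 1 then 2 else 3

lemma S_lt (w : List AB) : S w < 4 := Nat.mod_lt _ (by norm_num)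

lemma fv_inj {w w' : List AB} (h : fv w = fv w') : S w = S w' := by
  have h1 := S_lt w
  have h2 := S_lt w'
  unfold fv at h
  split_ifs at h <;> omega

lemma alpha2_pos (w : List AB) (h : S w % 2 = 1) : ∃ i ∈ blocks w, i % 3 = 2 := by
  have : alpha w 2 % 2 = 1 := by
    have hS : S w = (2 * w.count AB.b + 2 * alpha w 1 + alpha w 2) % 4 := rfl
    omega
  have hpos : 0 < (blocks w).countP (fun i => i % 3 == 2) := by
    unfold alpha at this; omega
  obtain ⟨i, hmem, hp⟩ := List.countP_pos_iff.mp hpos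
  exact ⟨i, hmem, by simpa using hp⟩

lemma ex_plus2 (w : List AB) (hS : S w = 2 ∨ S w = 3) :
    ∃ w', Step w w' ∧ V w' = V w + 2 := by
  by_cases h1 : ∃ i ∈ blocks w, i % 3 = 1
  · exact ex_res1 w h1
  · push_neg at h1
    by_cases hcnt : 1 ≤ w.count AB.b
    · exact ex_merge w hcnt h1
    · exfalso
      have hc0 : w.count AB.b = 0 := by omega
      have ha1 : alpha w 1 = 0 := by
        rw [alpha, List.countP_eq_zero]
        intro i hi
        simpa using h1 i hi
      have ha2 : alpha w 2 ≤ 1 := by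
        calc alpha w 2 ≤ (blocks w).length := List.countP_le_length
        _ = 1 := by rw [length_blocks, hc0]
      have hSdef : S w = (2 * w.count AB.b + 2 * alpha w 1 + alpha w 2) % 4 := rfl
      omega

/-! ### main induction -/

lemma grundy_eq_fv (g : List AB → ℕ) (hg : IsGrundy Step g) : ∀ w, g w = fv w := by
  have main : ∀ n w, w.length < n → g w = fv w := by
    intro n
    induction n with
    | zero => intro w hw; omega
    | succ n ih =>
      intro w hw
      rw [hg w]
      apply mex_eq
      · rintro ⟨w', hstep, hgw'⟩
        have hlen : w'.length < n := lt_of_lt_of_le (step_length hstep) (by omega)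
        rw [ih w' hlen] at hgw'
        have hSeq := fv_inj hgw'
        exact step_V hstep (V_eq_of_S_eq hSeq)
      · intro m hm
        -- produce moves
        have hmk : ∀ w' d, Step w w' → V w' = V w + d → (((S w : ZMod 4) + d).val = S w') := by
          intro w' d hs hV
          rw [← V_cast_S, ← hV, ← S_val w']
        have hS4 := S_lt w
        have mem_of : ∀ w', Step w w' → fv w' = m → m ∈ g '' {u | Step w u} := by
          intro w' hs hfv
          refine ⟨w', hs, ?_⟩
          have hlen : w'.length < n := lt_of_lt_of_le (step_length hs) (by omega)
          rw [ih w' hlen, hfv]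
        -- case on S w
        rcases hv : S w with _ | _ | _ | _ | k
        · -- S w = 0 : fv w = 0, no m
          exfalso; simp [fv, hv] at hm
        · -- S w = 1 : fv w = 2, m ∈ {0, 1}
          have hfvw : fv w = 2 := by simp [fv, hv]
          rw [hfvw] at hm
          obtain ⟨hm1, hm3⟩ := ex_res2 w (alpha2_pos w (by omega))
          interval_cases m
          · -- need S w' = 0, i.e. V + 3
            obtain ⟨w', hs, hV⟩ := hm3
            have hS' : S w' = 0 := by
              have := hmk w' 3 hs hV; rw [hv] at this; rw [← this]; decide
            exact mem_of w' hs (by simp [fv, hS'])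
          · -- need S w' = 2, i.e. V + 1
            obtain ⟨w', hs, hV⟩ := hm1
            have hS' : S w' = 2 := by
              have := hmk w' 1 hs hV; rw [hv] at this; rw [← this]; decide
            exact mem_of w' hs (by simp [fv, hS'])
        · -- S w = 2 : fv w = 1, m = 0
          have hfvw : fv w = 1 := by simp [fv, hv]
          rw [hfvw] at hm
          interval_cases m
          obtain ⟨w', hs, hV⟩ := ex_plus2 w (Or.inl hv)
          have hS' : S w' = 0 := by
            have := hmk w' 2 hs hV; rw [hv] at this; rw [← this]; decide
          exact mem_of w' hs (by simp [fv, hS'])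
        · -- S w = 3 : fv w = 3, m ∈ {0,1,2}
          have hfvw : fv w = 3 := by simp [fv, hv]
          rw [hfvw] at hm
          obtain ⟨hm1, hm3⟩ := ex_res2 w (alpha2_pos w (by omega))
          interval_cases m
          · obtain ⟨w', hs, hV⟩ := hm1
            have hS' : S w' = 0 := by
              have := hmk w' 1 hs hV; rw [hv] at this; rw [← this]; decide
            exact mem_of w' hs (by simp [fv, hS'])
          · obtain ⟨w', hs, hV⟩ := hm3
            have hS' : S w' = 2 := by
              have := hmk w' 3 hs hV; rw [hv] at this; rw [← this]; decide
            exact mem_of w' hs (by simp [fv, hS'])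
          · obtain ⟨w', hs, hV⟩ := ex_plus2 w (Or.inr hv)
            have hS' : S w' = 1 := by
              have := hmk w' 2 hs hV; rw [hv] at this; rw [← this]; decide
            exact mem_of w' hs (by simp [fv, hS'])
        · omega
  intro w
  exact main (w.length + 1) w (by omega)

theorem stmt10 (g : List AB → ℕ) (hg : IsGrundy Step g) :
    ∀ w : List AB,
      (S w = 0 → g w = 0) ∧ (S w = 2 → g w = 1) ∧
      (S w = 1 → g w = 2) ∧ (S w = 3 → g w = 3) := by
  intro w
  have h := grundy_eq_fv g hg w
  refine ⟨fun hs => ?_, fun hs => ?_, fun hs => ?_, fun hs => ?_⟩ <;>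
    rw [h] <;> simp [fv, hs]
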